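/- For distinct lines ℓ and ℓ' in ℍ^n, the composite r_ℓ ∘ r_{ℓ'} of the reflections of order 2 in ℓ and ℓ' has order 3 (as an invertible ℍ-linear map) if and only if the angle between ℓ and ℓ' is π/3. -/

import Mathlib

noncomputable section

local notation "ℍ" => Quaternion ℝ

/-- The standard Hermitian form on `ℍⁿ`, conjugate-linear in the first variable and
ℍ-linear in the second: `⟨x,y⟩ = ∑ i, star (x i) * y i`. -/
def qInner {n : ℕ} (x y : Fin n → ℍ) : ℍ := ∑ i, star (x i) * y i

/-- The norm `|v| = √⟨v,v⟩` on `ℍⁿ`. -/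
def qNorm {n : ℕ} (v : Fin n → ℍ) : ℝ := Real.sqrt (qInner v v).re

/-- The ℍ-line `vℍ` spanned by `v` (the set of right scalar multiples of `v`). -/
def lineOf {n : ℕ} (v : Fin n → ℍ) : Set (Fin n → ℍ) := {w | ∃ c : ℍ, w = fun i => v i * c}

/-- `ℓ` and `ℓ'` are at angle `θ ∈ [0, π/2]`: for all nonzero `v ∈ ℓ`, `w ∈ ℓ'`,
`|⟨v,w⟩| = cos θ · |v|·|w|`. -/
def atAngle {n : ℕ} (ℓ ℓ' : Set (Fin n → ℍ)) (θ : ℝ) : Prop :=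
  ∀ v ∈ ℓ, ∀ w ∈ ℓ', v ≠ 0 → w ≠ 0 → ‖qInner v w‖ = Real.cos θ * (qNorm v * qNorm w)

/-- The reflection of order 2 in the line `αℍ`: `r(v) = v − α·(2/⟨α,α⟩)·⟨α,v⟩`. -/
def reflectIn {n : ℕ} (α : Fin n → ℍ) (v : Fin n → ℍ) : Fin n → ℍ :=
  fun i => v i - α i * ((2 / qInner α α) * qInner α v)

-- aux lemmas
lemma qInner_self (n : ℕ) (v : Fin n → ℍ) :
    qInner v v = ((∑ i, Quaternion.normSq (v i) : ℝ) : ℍ) := by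
  unfold qInner
  rw [← Quaternion.algebraMap_def, map_sum]
  exact Finset.sum_congr rfl fun i _ => Quaternion.star_mul_self (v i)

lemma qInner_star (n : ℕ) (v w : Fin n → ℍ) : star (qInner v w) = qInner w v := by
  unfold qInner
  simp [star_sum, star_mul]

lemma qInner_mulr (n : ℕ) (v y : Fin n → ℍ) (q : ℍ) :
    qInner v (fun i => y i * q) = qInner v y * q := by
  unfold qInner
  rw [Finset.sum_mul]
  exact Finset.sum_congr rfl fun i _ => (mul_assoc _ _ _).symm

lemma qInner_sub (n : ℕ) (v y z : Fin n → ℍ) :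
    qInner v (fun i => y i - z i) = qInner v y - qInner v z := by
  unfold qInner
  rw [← Finset.sum_sub_distrib]
  exact Finset.sum_congr rfl fun i _ => by rw [mul_sub]


lemma qInner_add (n : ℕ) (v y z : Fin n → ℍ) :
    qInner v (fun i => y i + z i) = qInner v y + qInner v z := by
  unfold qInner
  rw [← Finset.sum_add_distrib]
  exact Finset.sum_congr rfl fun i _ => by rw [mul_add]

lemma qInner_self_pos (n : ℕ) (v : Fin n → ℍ) (hv : v ≠ 0) :
    0 < ∑ i, Quaternion.normSq (v i) := by
  apply Finset.sum_pos' (fun i _ => Quaternion.normSq_nonneg)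
  rcases Function.ne_iff.mp hv with ⟨i, hi⟩
  exact ⟨i, Finset.mem_univ i, lt_of_le_of_ne Quaternion.normSq_nonneg
    (Ne.symm (Quaternion.normSq_ne_zero.mpr hi))⟩

lemma qInner_form (n : ℕ) (u x y z : Fin n → ℍ) (p q : ℍ) :
    qInner u (fun i => x i + y i * p + z i * q)
      = qInner u x + qInner u y * p + qInner u z * q := by
  unfold qInner
  rw [Finset.sum_mul, Finset.sum_mul, ← Finset.sum_add_distrib, ← Finset.sum_add_distrib]
  exact Finset.sum_congr rfl fun i _ => by rw [mul_add, mul_add, mul_assoc, mul_assoc]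

lemma qcoe_div (r s : ℝ) : ((r/s : ℝ) : ℍ) = (r:ℍ)/(s:ℍ) := by
  rw [← Quaternion.algebraMap_def, map_div₀]

lemma qcoe_two : ((2:ℝ):ℍ) = (2:ℍ) := by
  rw [← Quaternion.algebraMap_def]
  exact map_ofNat (algebraMap ℝ (Quaternion ℝ)) 2

lemma step_v (n : ℕ) (v w x : Fin n → ℍ) (A : ℝ) (hA : qInner v v = ((A:ℝ):ℍ))
    (p q p' : ℍ)
    (hp' : p' = p - (2/A) • (qInner v x + A • p + qInner v w * q)) :
    reflectIn v (fun i => x i + v i * p + w i * q)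
      = fun i => x i + v i * p' + w i * q := by
  subst hp'
  funext i
  unfold reflectIn
  rw [qInner_form, hA, Quaternion.coe_mul_eq_smul]
  have h2 : (2 : ℍ) / ((A:ℝ):ℍ) = (((2/A : ℝ)):ℍ) := by
    rw [qcoe_div, qcoe_two]
  rw [h2, Quaternion.coe_mul_eq_smul, mul_sub, mul_smul_comm]
  simp only [sub_eq_add_neg, add_assoc, add_comm, add_left_comm]

lemma step_w (n : ℕ) (v w x : Fin n → ℍ) (B : ℝ) (hB : qInner w w = ((B:ℝ):ℍ))
    (p q q' : ℍ)
    (hq' : q' = q - (2/B) • (qInner w x + qInner w v * p + B • q)) :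
    reflectIn w (fun i => x i + v i * p + w i * q)
      = fun i => x i + v i * p + w i * q' := by
  subst hq'
  funext i
  unfold reflectIn
  rw [qInner_form, hB, Quaternion.coe_mul_eq_smul]
  have h2 : (2 : ℍ) / ((B:ℝ):ℍ) = (((2/B : ℝ)):ℍ) := by
    rw [qcoe_div, qcoe_two]
  rw [h2, Quaternion.coe_mul_eq_smul, mul_sub, mul_smul_comm]
  simp only [sub_eq_add_neg, add_assoc, add_comm, add_left_comm]

lemma qInner_mull (n : ℕ) (v y : Fin n → ℍ) (d : ℍ) :
    qInner (fun i => v i * d) y = star d * qInner v y := by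
  unfold qInner
  rw [Finset.mul_sum]
  exact Finset.sum_congr rfl fun i _ => by rw [star_mul, mul_assoc]

lemma lineOf_mul (n : ℕ) (v : Fin n → ℍ) (d : ℍ) (hd : d ≠ 0) :
    lineOf (fun i => v i * d) = lineOf v := by
  ext y
  constructor
  · rintro ⟨e, rfl⟩
    exact ⟨d * e, by funext i; rw [mul_assoc]⟩
  · rintro ⟨e, rfl⟩
    refine ⟨d⁻¹ * e, ?_⟩
    funext i
    rw [← mul_assoc, mul_assoc (v i), mul_inv_cancel₀ hd, mul_one]

lemma indep (n : ℕ) (v w : Fin n → ℍ) (hv : v ≠ 0) (hw : w ≠ 0)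
    (hne : lineOf v ≠ lineOf w) (p q : ℍ)
    (h : ∀ i, v i * p + w i * q = 0) : p = 0 ∧ q = 0 := by
  have hq : q = 0 := by
    by_contra hq
    apply hne
    have hwv : w = fun i => v i * (-(p * q⁻¹)) := by
      funext i
      have h1 : w i * q = -(v i * p) := by
        have h0 := h i
        rw [add_comm] at h0
        exact eq_neg_of_add_eq_zero_left h0
      have h2 : w i = -(v i * p) * q⁻¹ := by
        rw [← h1, mul_assoc, mul_inv_cancel₀ hq, mul_one]
      rw [h2]
      rw [neg_mul, mul_assoc, mul_neg]
    have hd : -(p * q⁻¹) ≠ 0 := by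
      intro h0
      apply hw
      rw [hwv]
      funext i
      rw [h0, mul_zero]
      rfl
    rw [hwv, lineOf_mul n v _ hd]
  refine ⟨?_, hq⟩
  by_contra hp
  apply hv
  funext i
  have h1 := h i
  rw [hq, mul_zero, add_zero] at h1
  rcases mul_eq_zero.mp h1 with h2 | h2
  · exact h2
  · exact absurd h2 hp

set_option maxHeartbeats 1000000 in
/-- For distinct lines `ℓ = vℍ` and `ℓ' = wℍ`, the composite `r_ℓ ∘ r_{ℓ'}` of the order-2 reflections has order 3 (as an invertible ℍ-linear map) iff the angle between `ℓ` and `ℓ'` is `π/3`. -/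
theorem reflections_product_order_3 (n : ℕ) (v w : Fin n → ℍ)
    (hv : v ≠ 0) (hw : w ≠ 0) (hne : lineOf v ≠ lineOf w) :
    orderOf (show Function.End (Fin n → ℍ) from reflectIn v ∘ reflectIn w) = 3 ↔
      atAngle (lineOf v) (lineOf w) (Real.pi / 3) := by
  set G : Function.End (Fin n → ℍ) := reflectIn v ∘ reflectIn w with hG
  clear_value G
  obtain ⟨A, hAdef⟩ : ∃ a : ℝ, a = ∑ i, Quaternion.normSq (v i) := ⟨_, rfl⟩
  obtain ⟨B, hBdef⟩ : ∃ a : ℝ, a = ∑ i, Quaternion.normSq (w i) := ⟨_, rfl⟩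
  have hA : qInner v v = ((A:ℝ):ℍ) := by rw [hAdef]; exact qInner_self n v
  have hB : qInner w w = ((B:ℝ):ℍ) := by rw [hBdef]; exact qInner_self n w
  have hApos : 0 < A := by rw [hAdef]; exact qInner_self_pos n v hv
  have hBpos : 0 < B := by rw [hBdef]; exact qInner_self_pos n w hw
  have hA0 : A ≠ 0 := ne_of_gt hApos
  have hB0 : B ≠ 0 := ne_of_gt hBpos
  obtain ⟨c, hcdef⟩ : ∃ a : ℍ, a = qInner v w := ⟨_, rfl⟩
  have hcw : qInner w v = star c := by rw [hcdef]; exact (qInner_star n v w).symm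
  obtain ⟨K, hKdef⟩ : ∃ a : ℝ, a = Quaternion.normSq c := ⟨_, rfl⟩
  have hK1 : c * star c = ((K:ℝ):ℍ) := by rw [hKdef]; exact Quaternion.self_mul_star c
  have hK2 : star c * c = ((K:ℝ):ℍ) := by rw [hKdef]; exact Quaternion.star_mul_self c
  have hKnn : 0 ≤ K := by rw [hKdef]; exact Quaternion.normSq_nonneg
  have hind := indep n v w hv hw hne
  have extract : ∀ (p q : ℍ), ((fun i => v i + v i * p + w i * q) = v) → p = 0 ∧ q = 0 := by
    intro p q h
    apply hind
    intro i
    have h1 := congrFun h i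
    simp only [add_assoc] at h1
    exact left_eq_add.mp h1.symm
  -- the triple-composite formula
  have triple : ∀ x : Fin n → ℍ,
      reflectIn v (reflectIn w (reflectIn v (reflectIn w (reflectIn v (reflectIn w x)))))
        = fun i => x i
            + v i * ((16*K/(A^2*B) - 2/A - 32*K^2/(A^3*B^2)) • qInner v x
                + (8/(A*B) - 48*K/(A^2*B^2) + 64*K^2/(A^3*B^3)) • (c * qInner w x))
            + w i * ((16*K/(A^2*B^2) - 4/(A*B)) • (star c * qInner v x)
                + (16*K/(A*B^2) - 2/B - 32*K^2/(A^2*B^3)) • qInner w x) := by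
    intro x
    set s := qInner v x with hsdef
    set t := qInner w x with htdef
    clear_value s t
    have hc1 : ∀ y : ℍ, c * (star c * y) = K • y := by
      intro y; rw [← mul_assoc, hK1, Quaternion.coe_mul_eq_smul]
    have hc2 : ∀ y : ℍ, star c * (c * y) = K • y := by
      intro y; rw [← mul_assoc, hK2, Quaternion.coe_mul_eq_smul]
    have h0 : x = fun i => x i + v i * 0 + w i * 0 := by funext i; simp
    obtain ⟨q1, hq1⟩ : ∃ q1:ℍ, q1 = -((2/B) • t) := ⟨_, rfl⟩
    obtain ⟨p2, hp2⟩ : ∃ p2:ℍ, p2 = -((2/A) • s) + (4/(A*B)) • (c * t) := ⟨_, rfl⟩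
    obtain ⟨q3, hq3⟩ : ∃ q3:ℍ, q3 = (4/(A*B)) • (star c * s) + (-(8*K/(A*B^2))) • t := ⟨_, rfl⟩
    obtain ⟨p4, hp4⟩ : ∃ p4:ℍ,
      p4 = (-(8*K/(A^2*B))) • s + (16*K/(A^2*B^2) - 4/(A*B)) • (c * t) := ⟨_, rfl⟩
    obtain ⟨q5, hq5⟩ : ∃ q5:ℍ,
      q5 = (16*K/(A^2*B^2) - 4/(A*B)) • (star c * s)
            + (16*K/(A*B^2) - 2/B - 32*K^2/(A^2*B^3)) • t := ⟨_, rfl⟩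
    obtain ⟨p6, hp6⟩ : ∃ p6:ℍ,
      p6 = (16*K/(A^2*B) - 2/A - 32*K^2/(A^3*B^2)) • s
            + (8/(A*B) - 48*K/(A^2*B^2) + 64*K^2/(A^3*B^3)) • (c * t) := ⟨_, rfl⟩
    have e1 : reflectIn w x = fun i => x i + v i * 0 + w i * q1 := by
      conv_lhs => rw [h0]
      apply step_w n v w x B hB
      simp only [← hsdef, ← htdef, ← hcdef, hcw]
      rw [hq1]
      simp only [mul_zero, smul_zero, add_zero, zero_sub]
    have e2 : reflectIn v (fun i => x i + v i * 0 + w i * q1)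
        = fun i => x i + v i * p2 + w i * q1 := by
      apply step_v n v w x A hA
      simp only [← hsdef, ← htdef, ← hcdef, hcw]
      rw [hp2, hq1]
      simp only [mul_add, mul_sub, mul_neg, mul_zero, mul_smul_comm, smul_add, smul_sub,
        smul_neg, smul_zero, smul_smul, hc1, hc2, add_zero, zero_add, zero_sub]
      match_scalars <;> field_simp <;> ring
    have e3 : reflectIn w (fun i => x i + v i * p2 + w i * q1)
        = fun i => x i + v i * p2 + w i * q3 := by
      apply step_w n v w x B hB
      simp only [← hsdef, ← htdef, ← hcdef, hcw]
      rw [hq3, hq1, hp2]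
      simp only [mul_add, mul_sub, mul_neg, mul_zero, mul_smul_comm, smul_add, smul_sub,
        smul_neg, smul_zero, smul_smul, hc1, hc2, add_zero, zero_add, zero_sub]
      match_scalars <;> field_simp <;> ring
    have e4 : reflectIn v (fun i => x i + v i * p2 + w i * q3)
        = fun i => x i + v i * p4 + w i * q3 := by
      apply step_v n v w x A hA
      simp only [← hsdef, ← htdef, ← hcdef, hcw]
      rw [hp4, hp2, hq3]
      simp only [mul_add, mul_sub, mul_neg, mul_zero, mul_smul_comm, smul_add, smul_sub,
        smul_neg, smul_zero, smul_smul, hc1, hc2, add_zero, zero_add, zero_sub]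
      match_scalars <;> field_simp <;> ring
    have e5 : reflectIn w (fun i => x i + v i * p4 + w i * q3)
        = fun i => x i + v i * p4 + w i * q5 := by
      apply step_w n v w x B hB
      simp only [← hsdef, ← htdef, ← hcdef, hcw]
      rw [hq5, hq3, hp4]
      simp only [mul_add, mul_sub, mul_neg, mul_zero, mul_smul_comm, smul_add, smul_sub,
        smul_neg, smul_zero, smul_smul, hc1, hc2, add_zero, zero_add, zero_sub]
      match_scalars <;> field_simp <;> ring
    have e6 : reflectIn v (fun i => x i + v i * p4 + w i * q5)
        = fun i => x i + v i * p6 + w i * q5 := by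
      apply step_v n v w x A hA
      simp only [← hsdef, ← htdef, ← hcdef, hcw]
      rw [hp6, hp4, hq5]
      simp only [mul_add, mul_sub, mul_neg, mul_zero, mul_smul_comm, smul_add, smul_sub,
        smul_neg, smul_zero, smul_smul, hc1, hc2, add_zero, zero_add, zero_sub]
      match_scalars <;> field_simp <;> ring
    rw [e1, e2, e3, e4, e5, e6, hp6, hq5]
  -- power unfolding
  have hpow3 : ∀ x : Fin n → ℍ, (G^3) x
      = reflectIn v (reflectIn w (reflectIn v (reflectIn w (reflectIn v (reflectIn w x))))) := by
    intro x
    rw [pow_succ, pow_succ, pow_one, hG]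
    rfl
  have hiff : G ^ 3 = 1 ↔ ∀ x : Fin n → ℍ,
      reflectIn v (reflectIn w (reflectIn v (reflectIn w (reflectIn v (reflectIn w x))))) = x := by
    constructor
    · intro h x
      rw [← hpow3 x, h]
      rfl
    · intro h
      funext x
      rw [hpow3 x]
      exact h x
  -- from order-3 equation to the numerical relation
  have key1 : (∀ x : Fin n → ℍ,
      reflectIn v (reflectIn w (reflectIn v (reflectIn w (reflectIn v (reflectIn w x))))) = x)
      → 4*K = A*B := by
    intro h
    have hv3 := h v
    rw [triple v] at hv3
    obtain ⟨hP, hQ⟩ := extract _ _ hv3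
    rw [hA, hcw, hK1, Quaternion.smul_coe, Quaternion.smul_coe, ← Quaternion.coe_add] at hP
    have hPr : (16*K/(A^2*B) - 2/A - 32*K^2/(A^3*B^2)) * A
        + (8/(A*B) - 48*K/(A^2*B^2) + 64*K^2/(A^3*B^3)) * K = 0 := by
      apply Quaternion.coe_injective
      rw [hP, Quaternion.coe_zero]
    rw [hA, hcw, Quaternion.mul_coe_eq_smul, smul_smul, ← add_smul] at hQ
    rcases smul_eq_zero.mp hQ with hQr | hc0
    · -- both real equations hold
      have hm2 : (4*K/(A*B) - 1) * (3 - 4*K/(A*B)) = 0 := by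
        have hfac : (16*K/(A^2*B^2) - 4/(A*B)) * A + (16*K/(A*B^2) - 2/B - 32*K^2/(A^2*B^3))
            = (2/B) * ((4*K/(A*B) - 1) * (3 - 4*K/(A*B))) := by
          field_simp
          ring
        rw [hfac] at hQr
        rcases mul_eq_zero.mp hQr with h' | h'
        · exfalso
          have : (2:ℝ)/B ≠ 0 := by positivity
          exact this h'
        · exact h'
      have hm1 : (4*K/(A*B) - 1) * ((4*K/(A*B))^2 - 4*(4*K/(A*B)) + 2) = 0 := by
        have hfac : (16*K/(A^2*B) - 2/A - 32*K^2/(A^3*B^2)) * A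
            + (8/(A*B) - 48*K/(A^2*B^2) + 64*K^2/(A^3*B^3)) * K
            = (4*K/(A*B) - 1) * ((4*K/(A*B))^2 - 4*(4*K/(A*B)) + 2) := by
          field_simp
          ring
        rw [← hfac]
        exact hPr
      rcases mul_eq_zero.mp hm2 with h' | h'
      · have : 4*K/(A*B) = 1 := by linarith
        have hAB : 0 < A*B := mul_pos hApos hBpos
        field_simp at this
        linarith
      · exfalso
        have h3 : 4*K/(A*B) = 3 := by linarith
        rw [h3] at hm1
        norm_num at hm1
    · -- c = 0 : impossible
      exfalso
      have hczero : c = 0 := star_eq_zero.mp hc0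
      have hK0 : K = 0 := by rw [hKdef, hczero]; simp
      rw [hK0] at hPr
      field_simp at hPr
      have hAB2 : 0 < A*B*(A*B*(A*B)) := by positivity
      nlinarith
  -- from the numerical relation to the order-3 equation
  have key2 : 4*K = A*B → ∀ x : Fin n → ℍ,
      reflectIn v (reflectIn w (reflectIn v (reflectIn w (reflectIn v (reflectIn w x))))) = x := by
    intro h4 x
    rw [triple x]
    have hKv : K = A*B/4 := by linarith
    have hC1 : 16*K/(A^2*B) - 2/A - 32*K^2/(A^3*B^2) = 0 := by
      rw [hKv]; field_simp; ring
    have hC2 : 8/(A*B) - 48*K/(A^2*B^2) + 64*K^2/(A^3*B^3) = 0 := by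
      rw [hKv]; field_simp; ring
    have hC3 : 16*K/(A^2*B^2) - 4/(A*B) = 0 := by
      rw [hKv]; field_simp; ring
    have hC4 : 16*K/(A*B^2) - 2/B - 32*K^2/(A^2*B^3) = 0 := by
      rw [hKv]; field_simp; ring
    rw [hC1, hC2, hC3, hC4]
    funext i
    simp
  -- the composite is never the identity when 4K = AB
  have hGne : 4*K = A*B → G ≠ 1 := by
    intro h4 h1
    rw [hG] at h1
    have hv1 : reflectIn v (reflectIn w v) = v := congrFun h1 v
    have h0v : v = fun i => v i + v i * 0 + w i * 0 := by funext i; simp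
    have s1 : reflectIn w v = fun i => v i + v i * 0 + w i * (-((2/B) • star c)) := by
      conv_lhs => rw [h0v]
      apply step_w n v w v B hB
      simp only [hcw]
      simp only [mul_zero, smul_zero, add_zero, zero_sub]
    have s2 : reflectIn v (fun i => v i + v i * 0 + w i * (-((2/B) • star c)))
        = fun i => v i + v i * ((-1:ℝ):ℍ) + w i * (-((2/B) • star c)) := by
      apply step_v n v w v A hA
      simp only [hA, ← hcdef]
      rw [mul_neg, mul_smul_comm, hK1]
      simp only [smul_zero, add_zero, zero_sub, Quaternion.smul_coe, ← Quaternion.coe_neg,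
        ← Quaternion.coe_add]
      apply congrArg (fun r : ℝ => (r : ℍ))
      field_simp
      linarith
    rw [s1, s2] at hv1
    have hP := (extract _ _ hv1).1
    rw [← Quaternion.coe_zero] at hP
    have := Quaternion.coe_injective hP
    norm_num at this
  -- the angle condition is equivalent to the numerical relation
  have hnormc : ‖c‖ * ‖c‖ = K := by rw [hKdef]; exact (Quaternion.normSq_eq_norm_mul_self c).symm
  have hqv : qNorm v = Real.sqrt A := by unfold qNorm; rw [hA, Quaternion.re_coe]
  have hqw : qNorm w = Real.sqrt B := by unfold qNorm; rw [hB, Quaternion.re_coe]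
  have hsA : Real.sqrt A * Real.sqrt A = A := Real.mul_self_sqrt hApos.le
  have hsB : Real.sqrt B * Real.sqrt B = B := Real.mul_self_sqrt hBpos.le
  have angle_iff : atAngle (lineOf v) (lineOf w) (Real.pi/3) ↔ 4*K = A*B := by
    constructor
    · intro h
      have hvm : v ∈ lineOf v := ⟨1, by funext i; rw [mul_one]⟩
      have hwm : w ∈ lineOf w := ⟨1, by funext i; rw [mul_one]⟩
      have h1 := h v hvm w hwm hv hw
      rw [Real.cos_pi_div_three, hqv, hqw, ← hcdef] at h1
      have h2 : ‖c‖ * ‖c‖ = (1/2 * (Real.sqrt A * Real.sqrt B)) * (1/2 * (Real.sqrt A * Real.sqrt B)) := by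
        rw [h1]
      rw [hnormc] at h2
      nlinarith [h2, hsA, hsB]
    · intro h4
      intro v' hv' w' hw' hv'0 hw'0
      obtain ⟨c1, rfl⟩ := hv'
      obtain ⟨c2, rfl⟩ := hw'
      have hc1 : c1 ≠ 0 := by
        rintro rfl
        exact hv'0 (by funext i; simp)
      have hc2 : c2 ≠ 0 := by
        rintro rfl
        exact hw'0 (by funext i; simp)
      have hI : qInner (fun i => v i * c1) (fun i => w i * c2) = star c1 * (c * c2) := by
        rw [qInner_mull, qInner_mulr, ← hcdef]
      have hNv : qNorm (fun i => v i * c1) = Real.sqrt A * ‖c1‖ := by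
        unfold qNorm
        rw [qInner_mull, qInner_mulr, hA, Quaternion.coe_mul_eq_smul, mul_smul_comm,
          Quaternion.star_mul_self, Quaternion.smul_coe, Quaternion.re_coe,
          Real.sqrt_mul hApos.le, Quaternion.normSq_eq_norm_mul_self,
          Real.sqrt_mul_self (norm_nonneg c1)]
      have hNw : qNorm (fun i => w i * c2) = Real.sqrt B * ‖c2‖ := by
        unfold qNorm
        rw [qInner_mull, qInner_mulr, hB, Quaternion.coe_mul_eq_smul, mul_smul_comm,
          Quaternion.star_mul_self, Quaternion.smul_coe, Quaternion.re_coe,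
          Real.sqrt_mul hBpos.le, Quaternion.normSq_eq_norm_mul_self,
          Real.sqrt_mul_self (norm_nonneg c2)]
      rw [hI, hNv, hNw, Real.cos_pi_div_three, norm_mul, norm_mul, norm_star]
      have hcn : ‖c‖ = 1/2 * (Real.sqrt A * Real.sqrt B) := by
        have hX : ‖c‖ * ‖c‖ = (1/2 * (Real.sqrt A * Real.sqrt B)) * (1/2 * (Real.sqrt A * Real.sqrt B)) := by
          rw [hnormc]
          have hexp : (1/2 * (Real.sqrt A * Real.sqrt B)) * (1/2 * (Real.sqrt A * Real.sqrt B))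
              = (Real.sqrt A * Real.sqrt A) * (Real.sqrt B * Real.sqrt B) / 4 := by ring
          rw [hexp, hsA, hsB]
          linarith
        rcases mul_self_eq_mul_self_iff.mp hX with h' | h'
        · exact h'
        · have hXnn : 0 ≤ 1/2 * (Real.sqrt A * Real.sqrt B) := by positivity
          have := norm_nonneg c
          linarith
      rw [hcn]
      ring
  -- final assembly
  constructor
  · intro h3
    apply angle_iff.mpr
    apply key1
    apply hiff.mp
    rw [← h3]
    exact pow_orderOf_eq_one G
  · intro hang
    have h4 := angle_iff.mp hang
    haveI : Fact (Nat.Prime 3) := ⟨by norm_num⟩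
    exact orderOf_eq_prime (hiff.mpr (key2 h4)) (hGne h4)
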